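/- Let g ∈ 𝒢_m and let l be the Lebesgue measure of the fixed point set Fix(g) = {x ∈ [0,1) : g(x) = x}. Then there exists h ∈ 𝒢_m such that Fix(h∘g∘h⁻¹) = [0, l); moreover h∘g∘h⁻¹ ∈ 𝒢_{3m}. -/

import Mathlib

/-- `f` is an interval exchange transformation (IET) of `[0,1)`, viewed as a permutation of `ℝ`
that fixes every point outside `[0,1)`: there is a finite subdivision
`0 = a 0 < a 1 < … < a (m+1) = 1` such that `f` is a translation on each half-open
interval `[a i, a (i+1))`. -/
def IsIET (f : Equiv.Perm ℝ) : Prop :=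
  (∀ x : ℝ, x ∉ Set.Ico (0 : ℝ) 1 → f x = x) ∧
  ∃ (m : ℕ) (a : Fin (m + 2) → ℝ),
    a 0 = 0 ∧ a (Fin.last (m + 1)) = 1 ∧ StrictMono a ∧
    ∀ i : Fin (m + 1), ∃ c : ℝ, ∀ x ∈ Set.Ico (a i.castSucc) (a i.succ), f x = x + c

/-- `f` is an interval exchange transformation with flips (FIET) of `[0,1)`, viewed as a
permutation of `ℝ` fixing every point outside `[0,1)`: there is a finite subdivision
`0 = a 0 < a 1 < … < a (m+1) = 1` such that on each open interval `(a i, a (i+1))`, `f` is an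
isometry, i.e. of the form `x ↦ x + c` or `x ↦ c - x`. -/
def IsFIET (f : Equiv.Perm ℝ) : Prop :=
  (∀ x : ℝ, x ∉ Set.Ico (0 : ℝ) 1 → f x = x) ∧
  ∃ (m : ℕ) (a : Fin (m + 2) → ℝ),
    a 0 = 0 ∧ a (Fin.last (m + 1)) = 1 ∧ StrictMono a ∧
    ∀ i : Fin (m + 1),
      (∃ c : ℝ, ∀ x ∈ Set.Ioo (a i.castSucc) (a i.succ), f x = x + c) ∨
      (∃ c : ℝ, ∀ x ∈ Set.Ioo (a i.castSucc) (a i.succ), f x = c - x)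

/-- Two permutations of `ℝ` agree outside a finite set; this is equality of the classes in the
quotient group `𝒢̄` of FIETs modulo maps that are the identity off a finite set. -/
def FEq (f g : Equiv.Perm ℝ) : Prop := {x : ℝ | f x ≠ g x}.Finite

open scoped commutatorElement in
/-- The set of commutators `⁅a, b⁆ = a * b * a⁻¹ * b⁻¹` of interval exchange
transformations. -/
def IETCommutators : Set (Equiv.Perm ℝ) :=
  {x | ∃ a b : Equiv.Perm ℝ, IsIET a ∧ IsIET b ∧ x = ⁅a, b⁆}

open scoped commutatorElement in
/-- The set of commutators `⁅a, b⁆ = a * b * a⁻¹ * b⁻¹` of interval exchange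
transformations with flips. -/
def FIETCommutators : Set (Equiv.Perm ℝ) :=
  {x | ∃ a b : Equiv.Perm ℝ, IsFIET a ∧ IsFIET b ∧ x = ⁅a, b⁆}

/-- `g` is a product of at most `n` commutators of elements of the group `𝒢` of interval
exchange transformations; i.e. the commutator length of `g` in `𝒢` is at most `n`. -/
def IsProdOfIETCommutators (n : ℕ) (g : Equiv.Perm ℝ) : Prop :=
  ∃ l : List (Equiv.Perm ℝ), l.length ≤ n ∧ (∀ x ∈ l, x ∈ IETCommutators) ∧ g = l.prod

/-- `f ∈ 𝒢_m`: `f` is an IET of `[0,1)` admitting a subdivision into at most `m` half-open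
intervals on each of which it is a translation. -/
def MemGm (m : ℕ) (f : Equiv.Perm ℝ) : Prop :=
  (∀ x : ℝ, x ∉ Set.Ico (0 : ℝ) 1 → f x = x) ∧
  ∃ (k : ℕ) (a : Fin (k + 2) → ℝ), k + 1 ≤ m ∧
    a 0 = 0 ∧ a (Fin.last (k + 1)) = 1 ∧ StrictMono a ∧
    ∀ i : Fin (k + 1), ∃ c : ℝ, ∀ x ∈ Set.Ico (a i.castSucc) (a i.succ), f x = x + c

/-- `g` is periodic: every orbit `{gⁿ x : n ∈ ℤ}` is finite. -/
def IsPeriodicPerm (g : Equiv.Perm ℝ) : Prop :=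
  ∀ x : ℝ, (Set.range fun n : ℤ => (g ^ n) x).Finite

/-- `f` is a restricted rotation: for some half-open interval `J = [a, b) ⊆ [0,1)` and some
`α ∈ [0, b - a)`, `f` is the identity outside `J` and sends `x ∈ J` to
`a + ((x - a + α) mod (b - a))`. -/
def IsRestrictedRotation (f : Equiv.Perm ℝ) : Prop :=
  ∃ a b α : ℝ, 0 ≤ a ∧ a < b ∧ b ≤ 1 ∧ α ∈ Set.Ico (0 : ℝ) (b - a) ∧
    (∀ x : ℝ, x ∉ Set.Ico a b → f x = x) ∧
    ∀ x ∈ Set.Ico a b, f x = x + α - (b - a) * (⌊(x - a + α) / (b - a)⌋ : ℝ)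

/-- `Δ_α`: the additive subgroup of `ℝ` generated by `α 0, …, α (p-1)` and `1`. -/
def Delta {p : ℕ} (α : Fin p → ℝ) : AddSubgroup ℝ :=
  AddSubgroup.closure (Set.range α ∪ {1})

/-- `g ∈ Γ_α`: `g` is an IET all of whose discontinuity points (as a map of `[0,1)`)
belong to the subgroup `Δ`. -/
def MemGamma (Δ : AddSubgroup ℝ) (g : Equiv.Perm ℝ) : Prop :=
  IsIET g ∧
  ∀ x ∈ Set.Ico (0 : ℝ) 1, ¬ContinuousWithinAt (⇑g) (Set.Ico (0 : ℝ) 1) x → x ∈ Δ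

/-- `g ∈ Γ_α(J)` for `J = [c, d)`: `g` is an IET supported in `[c, d)` all of whose
discontinuity points belong to `Δ`. -/
def MemGammaJ (Δ : AddSubgroup ℝ) (c d : ℝ) (g : Equiv.Perm ℝ) : Prop :=
  IsIET g ∧ (∀ x : ℝ, x ∉ Set.Ico c d → g x = x) ∧
  ∀ x ∈ Set.Ico (0 : ℝ) 1, ¬ContinuousWithinAt (⇑g) (Set.Ico (0 : ℝ) 1) x → x ∈ Δ


namespace IETAux
variable {n : ℕ}

/-- Partial sum of lengths of intervals in `F` with index less than `i`. -/
def S (len : Fin n → ℝ) (F : Finset (Fin n)) (i : Fin n) : ℝ :=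
  ∑ j ∈ F.filter (fun j => j < i), len j

lemma S_nonneg (len : Fin n → ℝ) (hlen : ∀ i, 0 < len i) (F : Finset (Fin n)) (i : Fin n) :
    0 ≤ S len F i :=
  Finset.sum_nonneg fun j _ => (hlen j).le

lemma S_add_len_le (len : Fin n → ℝ) (hlen : ∀ i, 0 < len i) (F : Finset (Fin n))
    {i : Fin n} (hi : i ∈ F) : S len F i + len i ≤ ∑ j ∈ F, len j := by
  have h1 : S len F i + len i = ∑ j ∈ insert i (F.filter (fun j => j < i)), len j := by
    rw [Finset.sum_insert (by simp), S]; ring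
  rw [h1]
  apply Finset.sum_le_sum_of_subset_of_nonneg
  · intro j hj
    rcases Finset.mem_insert.1 hj with rfl | hj
    · exact hi
    · exact (Finset.mem_filter.1 hj).1
  · intro j _ _; exact (hlen j).le

lemma tile_disj (len : Fin n → ℝ) (hlen : ∀ i, 0 < len i) (F : Finset (Fin n))
    {i i' : Fin n} (hi : i ∈ F) (hlt : i < i') : S len F i + len i ≤ S len F i' := by
  have h1 : S len F i + len i = ∑ j ∈ insert i (F.filter (fun j => j < i)), len j := by
    rw [Finset.sum_insert (by simp), S]; ring
  rw [h1, S]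
  apply Finset.sum_le_sum_of_subset_of_nonneg
  · intro j hj
    rcases Finset.mem_insert.1 hj with rfl | hj
    · exact Finset.mem_filter.2 ⟨hi, hlt⟩
    · obtain ⟨h1, h2⟩ := Finset.mem_filter.1 hj
      exact Finset.mem_filter.2 ⟨h1, h2.trans hlt⟩
  · intro j _ _; exact (hlen j).le

lemma tile_mem (len : Fin n → ℝ) (hlen : ∀ i, 0 < len i) (F : Finset (Fin n))
    {y : ℝ} (hy0 : 0 ≤ y) (hy1 : y < ∑ j ∈ F, len j) :
    ∃ i ∈ F, S len F i ≤ y ∧ y < S len F i + len i := by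
  have hFne : F.Nonempty := by
    rcases F.eq_empty_or_nonempty with rfl | h
    · simp at hy1; linarith
    · exact h
  set T := F.filter (fun i => y < S len F i + len i) with hT
  have hTne : T.Nonempty := by
    obtain ⟨M, hM, hMmax⟩ := F.exists_max_image id hFne
    refine ⟨M, Finset.mem_filter.2 ⟨hM, ?_⟩⟩
    have : F.filter (fun j => j < M) = F.erase M := by
      ext j
      simp only [Finset.mem_filter, Finset.mem_erase]
      constructor
      · rintro ⟨h1, h2⟩; exact ⟨ne_of_lt h2, h1⟩
      · rintro ⟨h1, h2⟩; exact ⟨h2, lt_of_le_of_ne (hMmax j h2) h1⟩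
    have hsum : S len F M + len M = ∑ j ∈ F, len j := by
      rw [S, this, Finset.sum_erase_add _ _ hM]
    linarith [hsum]
  set i := T.min' hTne with hi
  have hiT : i ∈ T := T.min'_mem hTne
  obtain ⟨hiF, hilt⟩ := Finset.mem_filter.1 hiT
  refine ⟨i, hiF, ?_, hilt⟩
  rcases (F.filter (fun j => j < i)).eq_empty_or_nonempty with hG | hG
  · rw [S, hG]; simpa using hy0
  · obtain ⟨j, hjG, hjmax⟩ := (F.filter (fun j => j < i)).exists_max_image id hG
    obtain ⟨hjF, hji⟩ := Finset.mem_filter.1 hjG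
    have hSij : S len F i = S len F j + len j := by
      have : F.filter (fun j' => j' < i) = insert j (F.filter (fun j' => j' < j)) := by
        ext j'
        simp only [Finset.mem_filter, Finset.mem_insert]
        constructor
        · rintro ⟨h1, h2⟩
          rcases eq_or_ne j' j with rfl | hne
          · exact Or.inl rfl
          · exact Or.inr ⟨h1, lt_of_le_of_ne (hjmax j' (Finset.mem_filter.2 ⟨h1, h2⟩)) hne⟩
        · rintro (rfl | ⟨h1, h2⟩)
          · exact ⟨hjF, hji⟩
          · exact ⟨h1, h2.trans hji⟩
      rw [S, this, Finset.sum_insert (by simp)]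
      rw [S]; ring
    have hjnT : j ∉ T := fun hjT => absurd (T.min'_le j hjT) (not_le.2 hji)
    have : ¬ y < S len F j + len j := fun h => hjnT (Finset.mem_filter.2 ⟨hjF, h⟩)
    linarith [hSij]

lemma tile_unique (len : Fin n → ℝ) (hlen : ∀ i, 0 < len i) (F : Finset (Fin n))
    {y : ℝ} {i i' : Fin n} (hi : i ∈ F) (hi' : i' ∈ F)
    (h1 : S len F i ≤ y) (h1' : y < S len F i + len i)
    (h2 : S len F i' ≤ y) (h2' : y < S len F i' + len i') : i = i' := by
  rcases lt_trichotomy i i' with h | h | h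
  · have := tile_disj len hlen F hi h; linarith
  · exact h
  · have := tile_disj len hlen F hi' h; linarith

lemma telescope_total (k : ℕ) (a : Fin (k+2) → ℝ) :
    ∑ j : Fin (k+1), (a j.succ - a j.castSucc) = a (Fin.last (k+1)) - a 0 := by
  set f : ℕ → ℝ := fun r => a ⟨min r (k+1), by omega⟩ with hf
  have key : ∀ r, ∀ _hr : r ≤ k + 1, f r = a ⟨r, by omega⟩ := by
    intro r hr
    simp only [hf]
    congr 1
    apply Fin.ext
    show min r (k+1) = r
    omega
  have h1 : ∀ j : Fin (k+1), a j.succ - a j.castSucc = f (j.val + 1) - f j.val := by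
    intro j
    have hj := j.isLt
    rw [key (j.val + 1) (by omega), key j.val (by omega)]
    congr 1
  calc ∑ j : Fin (k+1), (a j.succ - a j.castSucc)
      = ∑ j : Fin (k+1), (f (j.val + 1) - f j.val) := Finset.sum_congr rfl fun j _ => h1 j
    _ = ∑ r ∈ Finset.range (k+1), (f (r + 1) - f r) :=
        Fin.sum_univ_eq_sum_range (fun r => f (r+1) - f r) (k+1)
    _ = f (k+1) - f 0 := Finset.sum_range_sub f (k+1)
    _ = a (Fin.last (k+1)) - a 0 := by
        rw [key (k+1) le_rfl, key 0 (by omega)]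
        congr 1

lemma telescope (k : ℕ) (a : Fin (k+2) → ℝ) (i : Fin (k+1)) :
    S (fun j => a j.succ - a j.castSucc) Finset.univ i = a i.castSucc - a 0 := by
  set f : ℕ → ℝ := fun r => a ⟨min r (k+1), by omega⟩ with hf
  have key : ∀ r, ∀ _hr : r ≤ k + 1, f r = a ⟨r, by omega⟩ := by
    intro r hr
    simp only [hf]
    congr 1
    apply Fin.ext
    show min r (k+1) = r
    omega
  have h1 : ∀ j : Fin (k+1), a j.succ - a j.castSucc = f (j.val + 1) - f j.val := by
    intro j
    have hj := j.isLt
    rw [key (j.val + 1) (by omega), key j.val (by omega)]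
    congr 1
  calc S (fun j => a j.succ - a j.castSucc) Finset.univ i
      = ∑ j : Fin (k+1), if j < i then a j.succ - a j.castSucc else 0 := by
        rw [S, Finset.sum_filter]
    _ = ∑ r ∈ Finset.range (k+1), (if r < i.val then f (r + 1) - f r else 0) := by
        rw [← Fin.sum_univ_eq_sum_range (fun r => if r < i.val then f (r+1) - f r else 0) (k+1)]
        refine Finset.sum_congr rfl fun j _ => ?_
        beta_reduce
        by_cases hji : j < i
        · rw [if_pos hji, if_pos (show (j:ℕ) < (i:ℕ) from hji), h1 j]
        · rw [if_neg hji, if_neg (show ¬(j:ℕ) < (i:ℕ) from fun h => hji h)]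
    _ = ∑ r ∈ Finset.range i.val, (f (r+1) - f r) := by
        rw [← Finset.sum_filter]
        have : (Finset.range (k+1)).filter (fun r => r < i.val) = Finset.range i.val := by
          ext r
          simp only [Finset.mem_filter, Finset.mem_range]
          omega
        rw [this]
    _ = f i.val - f 0 := Finset.sum_range_sub f i.val
    _ = a i.castSucc - a 0 := by
        have hi := i.isLt
        rw [key i.val (by omega), key 0 (by omega)]
        congr 1

/-- Piecewise translation sending block `[A i, A i + len i)` to `[s i, s i + len i)`. -/
noncomputable def pw (A s len : Fin n → ℝ)
    (hex : ∀ x ∈ Set.Ico (0:ℝ) 1, ∃! i, x ∈ Set.Ico (A i) (A i + len i)) (x : ℝ) : ℝ :=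
  if hx : x ∈ Set.Ico (0:ℝ) 1 then
    x - A ((hex x hx).exists.choose) + s ((hex x hx).exists.choose)
  else x

lemma pw_apply (A s len : Fin n → ℝ)
    (hex : ∀ x ∈ Set.Ico (0:ℝ) 1, ∃! i, x ∈ Set.Ico (A i) (A i + len i))
    (hA : ∀ i, Set.Ico (A i) (A i + len i) ⊆ Set.Ico (0:ℝ) 1)
    {x : ℝ} {i : Fin n} (hxi : x ∈ Set.Ico (A i) (A i + len i)) :
    pw A s len hex x = x - A i + s i := by
  have hx : x ∈ Set.Ico (0:ℝ) 1 := hA i hxi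
  rw [pw, dif_pos hx]
  have h1 := (hex x hx).exists.choose_spec
  have h2 := (hex x hx).unique h1 hxi
  rw [h2]

lemma pw_not (A s len : Fin n → ℝ)
    (hex : ∀ x ∈ Set.Ico (0:ℝ) 1, ∃! i, x ∈ Set.Ico (A i) (A i + len i))
    {x : ℝ} (hx : x ∉ Set.Ico (0:ℝ) 1) : pw A s len hex x = x := by
  rw [pw, dif_neg hx]

/-- The interval-exchange permutation determined by block data. -/
noncomputable def blockPerm (A s len : Fin n → ℝ)
    (hex : ∀ x ∈ Set.Ico (0:ℝ) 1, ∃! i, x ∈ Set.Ico (A i) (A i + len i))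
    (hex' : ∀ y ∈ Set.Ico (0:ℝ) 1, ∃! i, y ∈ Set.Ico (s i) (s i + len i))
    (hA : ∀ i, Set.Ico (A i) (A i + len i) ⊆ Set.Ico (0:ℝ) 1)
    (hs : ∀ i, Set.Ico (s i) (s i + len i) ⊆ Set.Ico (0:ℝ) 1) : Equiv.Perm ℝ where
  toFun := pw A s len hex
  invFun := pw s A len hex'
  left_inv := by
    intro x
    by_cases hx : x ∈ Set.Ico (0:ℝ) 1
    · obtain ⟨i, hi, -⟩ := hex x hx
      rw [pw_apply A s len hex hA hi]
      have hmem : x - A i + s i ∈ Set.Ico (s i) (s i + len i) := by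
        constructor <;> [linarith [hi.1]; linarith [hi.2]]
      rw [pw_apply s A len hex' hs hmem]
      ring
    · rw [pw_not A s len hex hx, pw_not s A len hex' hx]
  right_inv := by
    intro x
    by_cases hx : x ∈ Set.Ico (0:ℝ) 1
    · obtain ⟨i, hi, -⟩ := hex' x hx
      rw [pw_apply s A len hex' hs hi]
      have hmem : x - s i + A i ∈ Set.Ico (A i) (A i + len i) := by
        constructor <;> [linarith [hi.1]; linarith [hi.2]]
      rw [pw_apply A s len hex hA hmem]
      ring
    · rw [pw_not s A len hex' hx, pw_not A s len hex hx]

lemma blockPerm_apply (A s len : Fin n → ℝ) (hex hex' hA hs)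
    {x : ℝ} {i : Fin n} (hxi : x ∈ Set.Ico (A i) (A i + len i)) :
    blockPerm A s len hex hex' hA hs x = x - A i + s i :=
  pw_apply A s len hex hA hxi

lemma blockPerm_not (A s len : Fin n → ℝ) (hex hex' hA hs)
    {x : ℝ} (hx : x ∉ Set.Ico (0:ℝ) 1) :
    blockPerm A s len hex hex' hA hs x = x :=
  pw_not A s len hex hx

lemma blockPerm_inv_apply (A s len : Fin n → ℝ) (hex hex' hA hs)
    {y : ℝ} {i : Fin n} (hyi : y ∈ Set.Ico (s i) (s i + len i)) :
    (blockPerm A s len hex hex' hA hs)⁻¹ y = y - s i + A i := by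
  rw [Equiv.Perm.inv_def]
  exact pw_apply s A len hex' hs hyi

lemma memGm_of_finset (f : Equiv.Perm ℝ) (hf : ∀ x : ℝ, x ∉ Set.Ico (0:ℝ) 1 → f x = x)
    (P : Finset ℝ) (hP0 : (0:ℝ) ∈ P) (hP1 : (1:ℝ) ∈ P)
    (hPsub : ∀ p ∈ P, p ∈ Set.Icc (0:ℝ) 1)
    (N : ℕ) (hcard : P.card ≤ N + 1)
    (hstep : ∀ x ∈ Set.Ico (0:ℝ) 1, ∀ y ∈ Set.Ico (0:ℝ) 1, x ≤ y →
      (∀ p ∈ P, ¬ (x < p ∧ p ≤ y)) → f y - y = f x - x) :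
    MemGm N f := by
  have hcard2 : 2 ≤ P.card := by
    have : ({0, 1} : Finset ℝ) ⊆ P := by
      intro p hp
      rcases Finset.mem_insert.1 hp with rfl | hp
      · exact hP0
      · rw [Finset.mem_singleton.1 hp]; exact hP1
    calc 2 = ({0, 1} : Finset ℝ).card := by simp
    _ ≤ P.card := Finset.card_le_card this
  obtain ⟨k, hk⟩ : ∃ k, P.card = k + 2 := ⟨P.card - 2, by omega⟩
  set e := P.orderIsoOfFin hk with he
  set b : Fin (k + 2) → ℝ := fun i => (e i : ℝ) with hb
  have hbmono : StrictMono b := fun i j hij => by exact_mod_cast e.strictMono hij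
  have hbmem : ∀ i, b i ∈ P := fun i => (e i).2
  have hb0 : b 0 = 0 := by
    have h1 : b 0 ≤ 0 := by
      have := e.monotone (Fin.zero_le (e.symm ⟨0, hP0⟩))
      exact (Subtype.coe_le_coe.2 (by simpa using this) :
        ((e 0 : {x // x ∈ P}) : ℝ) ≤ ((⟨0, hP0⟩ : {x // x ∈ P}) : ℝ))
    have h2 : 0 ≤ b 0 := (hPsub _ (hbmem 0)).1
    linarith
  have hblast : b (Fin.last (k + 1)) = 1 := by
    have h1 : 1 ≤ b (Fin.last (k + 1)) := by
      have := e.monotone (Fin.le_last (e.symm ⟨1, hP1⟩))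
      exact (Subtype.coe_le_coe.2 (by simpa using this) :
        ((⟨1, hP1⟩ : {x // x ∈ P}) : ℝ) ≤ ((e (Fin.last (k + 1)) : {x // x ∈ P}) : ℝ))
    have h2 : b (Fin.last (k + 1)) ≤ 1 := (hPsub _ (hbmem _)).2
    linarith
  refine ⟨hf, k, b, by omega, hb0, hblast, hbmono, ?_⟩
  intro i
  have hbi0 : (0:ℝ) ≤ b i.castSucc := by rw [← hb0]; exact hbmono.monotone (Fin.zero_le _)
  have hbi1 : b i.castSucc < 1 := by
    rw [← hblast]
    exact hbmono (Fin.castSucc_lt_last i)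
  refine ⟨f (b i.castSucc) - b i.castSucc, ?_⟩
  intro x hx
  have hx01 : x ∈ Set.Ico (0:ℝ) 1 := by
    constructor
    · linarith [hx.1]
    · calc x < b i.succ := hx.2
        _ ≤ b (Fin.last (k+1)) := hbmono.monotone (Fin.le_last _)
        _ = 1 := hblast
  have key := hstep (b i.castSucc) ⟨hbi0, hbi1⟩ x hx01 hx.1 ?_
  · linarith [key]
  · intro p hp ⟨hp1, hp2⟩
    obtain ⟨j, hj⟩ : ∃ j : Fin (k+2), b j = p := ⟨e.symm ⟨p, hp⟩, by simp [hb]⟩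
    have hji : i.castSucc < j := by
      by_contra hle
      push_neg at hle
      exact absurd (hbmono.monotone hle) (by rw [hj]; linarith)
    have : i.succ ≤ j := by
      rw [Fin.le_iff_val_le_val]
      rw [Fin.lt_iff_val_lt_val] at hji
      simpa using hji
    have : b i.succ ≤ p := by rw [← hj]; exact hbmono.monotone this
    linarith [hx.2]

end IETAux

open IETAux in
open MeasureTheory in
theorem conjugate_fix_to_initial_interval (m : ℕ) (g : Equiv.Perm ℝ) (hg : MemGm m g) :
    ∃ h : Equiv.Perm ℝ, MemGm m h ∧
      {x ∈ Set.Ico (0 : ℝ) 1 | (h * g * h⁻¹) x = x} =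
        Set.Ico (0 : ℝ) ((volume {x ∈ Set.Ico (0 : ℝ) 1 | g x = x}).toReal) ∧
      MemGm (3 * m) (h * g * h⁻¹) := by
  obtain ⟨hgout, k, a, hk, ha0, ha1, hamono, hc⟩ := hg
  choose c hcspec using hc
  -- basic interval data
  set len : Fin (k+1) → ℝ := fun i => a i.succ - a i.castSucc with hlen_def
  have hlen : ∀ i, 0 < len i := fun i => sub_pos.2 (hamono (Fin.castSucc_lt_succ : i.castSucc < i.succ))
  have htot : ∑ j, len j = 1 := by
    simp only [hlen_def]
    rw [telescope_total k a, ha1, ha0]; ring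
  set F : Finset (Fin (k+1)) := Finset.univ.filter (fun i => c i = 0) with hF_def
  set l : ℝ := ∑ j ∈ F, len j with hl_def
  set A : Fin (k+1) → ℝ := fun i => a i.castSucc with hA_def
  set s : Fin (k+1) → ℝ := fun i => if i ∈ F then S len F i else l + S len Fᶜ i with hs_def
  have hAval : ∀ i, A i = a i.castSucc := fun i => rfl
  have hAtop : ∀ i, A i + len i = a i.succ := fun i => by
    simp only [hA_def, hlen_def]; ring
  have hSuniv : ∀ i, S len Finset.univ i = A i := fun i => by
    simp only [hlen_def, hA_def]
    rw [telescope k a i, ha0]; ring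
  have hl_nonneg : 0 ≤ l := Finset.sum_nonneg fun j _ => (hlen j).le
  have hl_le1 : l ≤ 1 := by
    rw [hl_def, ← htot]
    exact Finset.sum_le_sum_of_subset_of_nonneg (Finset.subset_univ F)
      (fun j _ _ => (hlen j).le)
  have hcompl : ∑ j ∈ Fᶜ, len j = 1 - l := by
    have h1 := Finset.sum_add_sum_compl F len
    rw [htot] at h1
    linarith
  have hsF : ∀ i ∈ F, s i = S len F i := fun i hi => by rw [hs_def]; exact if_pos hi
  have hsNF : ∀ i ∉ F, s i = l + S len Fᶜ i := fun i hi => by rw [hs_def]; exact if_neg hi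
  have hs_nonneg : ∀ i, 0 ≤ s i := by
    intro i
    by_cases hi : i ∈ F
    · rw [hsF i hi]; exact S_nonneg len hlen F i
    · rw [hsNF i hi]; have := S_nonneg len hlen Fᶜ i; linarith
  have hs_top_F : ∀ i ∈ F, s i + len i ≤ l := by
    intro i hi
    rw [hsF i hi, hl_def]
    exact S_add_len_le len hlen F hi
  have hs_top_NF : ∀ i ∉ F, s i + len i ≤ 1 := by
    intro i hi
    rw [hsNF i hi]
    have h1 := S_add_len_le len hlen Fᶜ (Finset.mem_compl.2 hi)
    rw [hcompl] at h1
    linarith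
  have hs_ge_l : ∀ i ∉ F, l ≤ s i := by
    intro i hi
    rw [hsNF i hi]
    have := S_nonneg len hlen Fᶜ i
    linarith
  -- existence and uniqueness of blocks
  have hex : ∀ x ∈ Set.Ico (0:ℝ) 1, ∃! i, x ∈ Set.Ico (A i) (A i + len i) := by
    intro x hx
    obtain ⟨i, -, h1, h2⟩ := tile_mem len hlen Finset.univ hx.1 (by rw [htot]; exact hx.2)
    rw [hSuniv] at h1 h2
    refine ⟨i, ⟨h1, h2⟩, ?_⟩
    intro i' hi'
    refine tile_unique len hlen Finset.univ (y := x) (Finset.mem_univ i') (Finset.mem_univ i) ?_ ?_ ?_ ?_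
      <;> rw [hSuniv]
    · exact hi'.1
    · exact hi'.2
    · exact h1
    · exact h2
  have hex' : ∀ y ∈ Set.Ico (0:ℝ) 1, ∃! i, y ∈ Set.Ico (s i) (s i + len i) := by
    intro y hy
    have huniq : ∀ i i', y ∈ Set.Ico (s i) (s i + len i) → y ∈ Set.Ico (s i') (s i' + len i')
        → i = i' := by
      intro i i' hi hi'
      by_cases hiF : i ∈ F <;> by_cases hi'F : i' ∈ F
      · rw [hsF i hiF] at hi; rw [hsF i' hi'F] at hi'
        exact tile_unique len hlen F hiF hi'F hi.1 hi.2 hi'.1 hi'.2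
      · exfalso
        have h1 : y < l := lt_of_lt_of_le hi.2 (hs_top_F i hiF)
        have h2 : l ≤ y := le_trans (hs_ge_l i' hi'F) hi'.1
        linarith
      · exfalso
        have h1 : y < l := lt_of_lt_of_le hi'.2 (hs_top_F i' hi'F)
        have h2 : l ≤ y := le_trans (hs_ge_l i hiF) hi.1
        linarith
      · obtain ⟨hi1, hi2⟩ := hi
        obtain ⟨hi'1, hi'2⟩ := hi'
        rw [hsNF i hiF] at hi1 hi2; rw [hsNF i' hi'F] at hi'1 hi'2
        refine tile_unique len hlen Fᶜ (Finset.mem_compl.2 hiF) (Finset.mem_compl.2 hi'F)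
          (y := y - l) (by linarith) (by linarith) (by linarith) (by linarith)
    by_cases hyl : y < l
    · obtain ⟨i, hiF, h1, h2⟩ := tile_mem len hlen F hy.1 (by rw [← hl_def]; exact hyl)
      rw [← hsF i hiF] at h1 h2
      exact ⟨i, ⟨h1, h2⟩, fun i' hi' => huniq i' i hi' ⟨h1, h2⟩⟩
    · push_neg at hyl
      obtain ⟨i, hiF, h1, h2⟩ := tile_mem len hlen Fᶜ (y := y - l) (by linarith)
        (by rw [hcompl]; linarith [hy.2])
      rw [Finset.mem_compl] at hiF
      have h1' : s i ≤ y := by rw [hsNF i hiF]; linarith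
      have h2' : y < s i + len i := by rw [hsNF i hiF]; linarith
      exact ⟨i, ⟨h1', h2'⟩, fun i' hi' => huniq i' i hi' ⟨h1', h2'⟩⟩
  have hAsub : ∀ i, Set.Ico (A i) (A i + len i) ⊆ Set.Ico (0:ℝ) 1 := by
    intro i x hx
    constructor
    · calc (0:ℝ) = a 0 := ha0.symm
        _ ≤ a i.castSucc := hamono.monotone (Fin.zero_le _)
        _ = A i := (hAval i).symm
        _ ≤ x := hx.1
    · calc x < A i + len i := hx.2
        _ = a i.succ := hAtop i
        _ ≤ a (Fin.last (k+1)) := hamono.monotone (Fin.le_last _)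
        _ = 1 := ha1
  have hssub : ∀ i, Set.Ico (s i) (s i + len i) ⊆ Set.Ico (0:ℝ) 1 := by
    intro i x hx
    refine ⟨le_trans (hs_nonneg i) hx.1, ?_⟩
    by_cases hi : i ∈ F
    · calc x < s i + len i := hx.2
        _ ≤ l := hs_top_F i hi
        _ ≤ 1 := hl_le1
    · exact lt_of_lt_of_le hx.2 (hs_top_NF i hi)
  -- the conjugating map
  set h : Equiv.Perm ℝ := blockPerm A s len hex hex' hAsub hssub with hh_def
  have hhout : ∀ x : ℝ, x ∉ Set.Ico (0:ℝ) 1 → h x = x :=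
    fun x hx => blockPerm_not A s len hex hex' hAsub hssub hx
  have hhap : ∀ {x : ℝ} {i : Fin (k+1)}, x ∈ Set.Ico (A i) (A i + len i) →
      h x = x - A i + s i :=
    fun hxi => blockPerm_apply A s len hex hex' hAsub hssub hxi
  have hhinv : ∀ {y : ℝ} {i : Fin (k+1)}, y ∈ Set.Ico (s i) (s i + len i) →
      h⁻¹ y = y - s i + A i :=
    fun hyi => blockPerm_inv_apply A s len hex hex' hAsub hssub hyi
  -- facts about g
  have hgc : ∀ (i : Fin (k+1)), ∀ x ∈ Set.Ico (A i) (A i + len i), g x = x + c i := by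
    intro i x hx
    exact hcspec i x ⟨by rw [← hAval]; exact hx.1, by rw [← hAtop]; exact hx.2⟩
  have hgmaps : ∀ x ∈ Set.Ico (0:ℝ) 1, g x ∈ Set.Ico (0:ℝ) 1 := by
    intro x hx
    by_contra hnot
    have h1 : g (g x) = g x := hgout _ hnot
    have h2 : g x = x := g.injective h1
    rw [h2] at hnot
    exact hnot hx
  have hginv_out : ∀ x : ℝ, x ∉ Set.Ico (0:ℝ) 1 → g⁻¹ x = x := by
    intro x hx
    rw [Equiv.Perm.inv_def, Equiv.symm_apply_eq]
    exact (hgout x hx).symm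
  have hginv_maps : ∀ x ∈ Set.Ico (0:ℝ) 1, g⁻¹ x ∈ Set.Ico (0:ℝ) 1 := by
    intro x hx
    by_contra hnot
    have h1 : g (g⁻¹ x) = g⁻¹ x := hgout _ hnot
    rw [show g (g⁻¹ x) = x from g.apply_symm_apply x] at h1
    rw [← h1] at hnot
    exact hnot hx
  have hci_mem : ∀ (i : Fin (k+1)), ∀ x ∈ Set.Ico (A i) (A i + len i),
      x + c i ∈ Set.Ico (0:ℝ) 1 := by
    intro i x hx
    rw [← hgc i x hx]
    exact hgmaps x (hAsub i hx)
  have hhmaps : ∀ x ∈ Set.Ico (0:ℝ) 1, h x ∈ Set.Ico (0:ℝ) 1 := by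
    intro x hx
    obtain ⟨i, hi, -⟩ := hex x hx
    rw [hhap hi]
    exact hssub i ⟨by linarith [hi.1], by linarith [hi.2]⟩
  -- membership of h in G_m
  have hmemh : MemGm m h := by
    refine memGm_of_finset h hhout (Finset.image a Finset.univ) ?_ ?_ ?_ m ?_ ?_
    · exact Finset.mem_image.2 ⟨0, Finset.mem_univ _, ha0⟩
    · exact Finset.mem_image.2 ⟨Fin.last (k+1), Finset.mem_univ _, ha1⟩
    · intro p hp
      obtain ⟨j, -, rfl⟩ := Finset.mem_image.1 hp
      constructor
      · rw [← ha0]; exact hamono.monotone (Fin.zero_le _)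
      · rw [← ha1]; exact hamono.monotone (Fin.le_last _)
    · calc (Finset.image a Finset.univ).card ≤ (Finset.univ : Finset (Fin (k+2))).card :=
          Finset.card_image_le
        _ = k + 2 := by simp
        _ ≤ m + 1 := by omega
    · intro x hx y hy hxy hP
      obtain ⟨i, hi, -⟩ := hex x hx
      have hyi : y ∈ Set.Ico (A i) (A i + len i) := by
        refine ⟨le_trans hi.1 hxy, ?_⟩
        by_contra hge
        push_neg at hge
        refine hP (a i.succ) (Finset.mem_image.2 ⟨i.succ, Finset.mem_univ _, rfl⟩) ⟨?_, ?_⟩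
        · rw [← hAtop]; exact hi.2
        · rw [← hAtop]; exact hge
      rw [hhap hi, hhap hyi]
      ring
  -- fixed points of the conjugate
  have hfix_iff : ∀ (y : ℝ) (i : Fin (k+1)), y ∈ Set.Ico (s i) (s i + len i) →
      ((h * g * h⁻¹) y = y ↔ c i = 0) := by
    intro y i hyi
    have hu : y - s i + A i ∈ Set.Ico (A i) (A i + len i) :=
      ⟨by linarith [hyi.1], by linarith [hyi.2]⟩
    have hy_eq : h (y - s i + A i) = y := by rw [hhap hu]; ring
    have happly : (h * g * h⁻¹) y = h ((y - s i + A i) + c i) := by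
      simp only [Equiv.Perm.mul_apply]
      rw [hhinv hyi, hgc i _ hu]
    rw [happly]
    constructor
    · intro he
      have h1 := h.injective (he.trans hy_eq.symm)
      linarith [h1]
    · intro hc0
      rw [hc0, add_zero, hy_eq]
  have hconjout : ∀ x : ℝ, x ∉ Set.Ico (0:ℝ) 1 → (h * g * h⁻¹) x = x := by
    intro x hx
    simp only [Equiv.Perm.mul_apply]
    have h1 : h⁻¹ x = x := by
      rw [Equiv.Perm.inv_def, Equiv.symm_apply_eq]
      exact (hhout x hx).symm
    rw [h1, hgout x hx, hhout x hx]
  -- volume of the fixed set of g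
  have hfixg : {x ∈ Set.Ico (0:ℝ) 1 | g x = x} = ⋃ i ∈ F, Set.Ico (A i) (A i + len i) := by
    ext x
    simp only [Set.mem_setOf_eq, Set.mem_iUnion, exists_prop]
    constructor
    · rintro ⟨hx01, hgx⟩
      obtain ⟨i, hi, -⟩ := hex x hx01
      refine ⟨i, ?_, hi⟩
      have h1 := hgc i x hi
      rw [hgx] at h1
      have hc0 : c i = 0 := by linarith
      rw [hF_def]
      exact Finset.mem_filter.2 ⟨Finset.mem_univ _, hc0⟩
    · rintro ⟨i, hiF, hx⟩
      refine ⟨hAsub i hx, ?_⟩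
      rw [hF_def] at hiF
      rw [hgc i x hx, (Finset.mem_filter.1 hiF).2, add_zero]
  have hvol : (volume {x ∈ Set.Ico (0:ℝ) 1 | g x = x}).toReal = l := by
    rw [hfixg]
    rw [measure_biUnion_finset ?hd ?hm]
    case hd =>
      intro i _ j _ hij
      simp only [Function.onFun]
      rw [Set.disjoint_left]
      intro x hxi hxj
      exact hij (tile_unique len hlen Finset.univ (y := x) (Finset.mem_univ i) (Finset.mem_univ j)
        (by rw [hSuniv]; exact hxi.1) (by rw [hSuniv]; exact hxi.2)
        (by rw [hSuniv]; exact hxj.1) (by rw [hSuniv]; exact hxj.2))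
    case hm => intro b _; exact measurableSet_Ico
    have h1 : ∀ i ∈ F, volume (Set.Ico (A i) (A i + len i)) = ENNReal.ofReal (len i) := by
      intro i _
      rw [Real.volume_Ico]
      congr 1
      ring
    rw [Finset.sum_congr rfl h1, ENNReal.toReal_sum (fun i _ => ENNReal.ofReal_ne_top)]
    rw [hl_def]
    exact Finset.sum_congr rfl fun i _ => ENNReal.toReal_ofReal (hlen i).le
  -- fixed set of the conjugate is [0, l)
  have hsetEq : {x ∈ Set.Ico (0:ℝ) 1 | (h * g * h⁻¹) x = x} = Set.Ico (0:ℝ) l := by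
    ext x
    simp only [Set.mem_setOf_eq, Set.mem_Ico]
    constructor
    · rintro ⟨hx01, hfx⟩
      obtain ⟨i, hi, -⟩ := hex' x hx01
      have hc0 : c i = 0 := (hfix_iff x i hi).1 hfx
      have hiF : i ∈ F := by rw [hF_def]; exact Finset.mem_filter.2 ⟨Finset.mem_univ _, hc0⟩
      exact ⟨hx01.1, lt_of_lt_of_le hi.2 (hs_top_F i hiF)⟩
    · rintro ⟨hx0, hxl⟩
      have hx01 : x ∈ Set.Ico (0:ℝ) 1 := ⟨hx0, lt_of_lt_of_le hxl hl_le1⟩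
      obtain ⟨i, hiF, h1, h2⟩ := tile_mem len hlen F hx0 (by rw [← hl_def]; exact hxl)
      rw [← hsF i hiF] at h1 h2
      refine ⟨hx01, (hfix_iff x i ⟨h1, h2⟩).2 ?_⟩
      have := Finset.mem_filter.1 (by rw [hF_def] at hiF; exact hiF)
      exact this.2
  -- key images
  have hA_in_block : ∀ i, A i ∈ Set.Ico (A i) (A i + len i) :=
    fun i => ⟨le_refl _, by linarith [hlen i]⟩
  have h_hA : ∀ i : Fin (k+1), h (a i.castSucc) = s i := by
    intro i
    have h1 := hhap (hA_in_block i)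
    rw [hAval i] at h1
    rw [h1]; ring
  have hexists0 : ∃ i : Fin (k+1), s i = 0 := by
    rcases F.eq_empty_or_nonempty with hFe | hFne
    · refine ⟨0, ?_⟩
      have h0nF : (0 : Fin (k+1)) ∉ F := by rw [hFe]; exact Finset.notMem_empty _
      rw [hsNF _ h0nF]
      have h1 : S len Fᶜ 0 = 0 := by
        rw [S]
        convert Finset.sum_empty
        ext j
        simp only [Finset.mem_filter, Finset.notMem_empty, iff_false, not_and]
        intro _
        exact Fin.not_lt_zero j
      have h2 : l = 0 := by rw [hl_def, hFe, Finset.sum_empty]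
      rw [h1, h2]; ring
    · refine ⟨F.min' hFne, ?_⟩
      rw [hsF _ (F.min'_mem hFne), S]
      convert Finset.sum_empty
      ext j
      simp only [Finset.mem_filter, Finset.notMem_empty, iff_false, not_and]
      intro hjF hji
      exact absurd (F.min'_le j hjF) (not_le.2 hji)
  -- helper for Icc preservation
  have hIcc : ∀ (e : Equiv.Perm ℝ), (∀ x : ℝ, x ∉ Set.Ico (0:ℝ) 1 → e x = x) →
      (∀ x ∈ Set.Ico (0:ℝ) 1, e x ∈ Set.Ico (0:ℝ) 1) →
      ∀ z ∈ Set.Icc (0:ℝ) 1, e z ∈ Set.Icc (0:ℝ) 1 := by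
    intro e hout hmaps z hz
    by_cases hz' : z ∈ Set.Ico (0:ℝ) 1
    · have := hmaps z hz'
      exact ⟨this.1, this.2.le⟩
    · rw [hout z hz']; exact hz
  have haIcc : ∀ j : Fin (k+2), a j ∈ Set.Icc (0:ℝ) 1 := fun j =>
    ⟨by rw [← ha0]; exact hamono.monotone (Fin.zero_le _),
     by rw [← ha1]; exact hamono.monotone (Fin.le_last _)⟩
  have h1notIco : (1:ℝ) ∉ Set.Ico (0:ℝ) 1 := by simp
  -- membership of the conjugate in G_{3m}
  have hmemconj : MemGm (3 * m) (h * g * h⁻¹) := by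
    refine memGm_of_finset (h * g * h⁻¹) hconjout
      ((Finset.image (fun j => h (a j)) Finset.univ) ∪
       (Finset.image (fun j => h (g⁻¹ (a j))) Finset.univ)) ?_ ?_ ?_ (3 * m) ?_ ?_
    · obtain ⟨i0, hi0⟩ := hexists0
      refine Finset.mem_union_left _ (Finset.mem_image.2 ⟨i0.castSucc, Finset.mem_univ _, ?_⟩)
      rw [h_hA i0, hi0]
    · refine Finset.mem_union_left _ (Finset.mem_image.2 ⟨Fin.last (k+1), Finset.mem_univ _, ?_⟩)
      rw [ha1]
      exact hhout 1 h1notIco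
    · intro p hp
      rcases Finset.mem_union.1 hp with hp | hp
      · obtain ⟨j, -, rfl⟩ := Finset.mem_image.1 hp
        exact hIcc h hhout hhmaps _ (haIcc j)
      · obtain ⟨j, -, rfl⟩ := Finset.mem_image.1 hp
        exact hIcc h hhout hhmaps _ (hIcc g⁻¹ hginv_out hginv_maps _ (haIcc j))
    · calc ((Finset.image (fun j => h (a j)) Finset.univ) ∪
           (Finset.image (fun j => h (g⁻¹ (a j))) Finset.univ)).card
          ≤ (Finset.image (fun j => h (a j)) Finset.univ).card +
            (Finset.image (fun j => h (g⁻¹ (a j))) Finset.univ).card := Finset.card_union_le _ _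
        _ ≤ (k + 2) + (k + 2) := by
            have c1 : (Finset.image (fun j : Fin (k+2) => h (a j)) Finset.univ).card ≤ k + 2 := by
              calc _ ≤ (Finset.univ : Finset (Fin (k+2))).card := Finset.card_image_le
                _ = k + 2 := by simp
            have c2 : (Finset.image (fun j : Fin (k+2) => h (g⁻¹ (a j))) Finset.univ).card ≤ k + 2 := by
              calc _ ≤ (Finset.univ : Finset (Fin (k+2))).card := Finset.card_image_le
                _ = k + 2 := by simp
            omega
        _ ≤ 3 * m + 1 := by omega
    · intro x hx y hy hxy hP
      obtain ⟨i, hi, hiu⟩ := hex' x hx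
      have hyi : y ∈ Set.Ico (s i) (s i + len i) := by
        obtain ⟨i', hi', -⟩ := hex' y hy
        by_cases hsx : s i' ≤ x
        · have hxi' : x ∈ Set.Ico (s i') (s i' + len i') := ⟨hsx, lt_of_le_of_lt hxy hi'.2⟩
          rw [hiu i' hxi'] at hi'
          exact hi'
        · exfalso
          push_neg at hsx
          exact hP (s i') (Finset.mem_union_left _
            (Finset.mem_image.2 ⟨i'.castSucc, Finset.mem_univ _, h_hA i'⟩)) ⟨hsx, hi'.1⟩
      have hu : x - s i + A i ∈ Set.Ico (A i) (A i + len i) :=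
        ⟨by linarith [hi.1], by linarith [hi.2]⟩
      have hv : y - s i + A i ∈ Set.Ico (A i) (A i + len i) :=
        ⟨by linarith [hyi.1], by linarith [hyi.2]⟩
      have hu' : (x - s i + A i) + c i ∈ Set.Ico (0:ℝ) 1 := hci_mem i _ hu
      obtain ⟨j, hj, -⟩ := hex _ hu'
      have hjtop : A j + len j = a j.succ := hAtop j
      have hvj : (y - s i + A i) + c i ∈ Set.Ico (A j) (A j + len j) := by
        refine ⟨le_trans hj.1 (by linarith), ?_⟩
        by_contra hge
        push_neg at hge
        have hu2 : x - s i + A i + c i < a j.succ := by rw [← hjtop]; exact hj.2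
        have hge' : a j.succ ≤ y - s i + A i + c i := by rw [← hjtop]; exact hge
        have hw : a j.succ - c i ∈ Set.Ico (A i) (A i + len i) :=
          ⟨by linarith [hu.1], by linarith [hv.2]⟩
        have hgw : g (a j.succ - c i) = a j.succ := by rw [hgc i _ hw]; ring
        have hginvw : g⁻¹ (a j.succ) = a j.succ - c i := by
          rw [Equiv.Perm.inv_def, Equiv.symm_apply_eq]
          exact hgw.symm
        refine hP (h (g⁻¹ (a j.succ))) (Finset.mem_union_right _
          (Finset.mem_image.2 ⟨j.succ, Finset.mem_univ _, rfl⟩)) ?_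
        rw [hginvw, hhap hw]
        constructor
        · linarith
        · linarith
      have e1 : (h * g * h⁻¹) x = (x - s i + A i) + c i - A j + s j := by
        simp only [Equiv.Perm.mul_apply]
        rw [hhinv hi, hgc i _ hu, hhap hj]
      have e2 : (h * g * h⁻¹) y = (y - s i + A i) + c i - A j + s j := by
        simp only [Equiv.Perm.mul_apply]
        rw [hhinv hyi, hgc i _ hv, hhap hvj]
      rw [e1, e2]
      ring
  refine ⟨h, hmemh, ?_, hmemconj⟩
  rw [hvol]
  exact hsetEq
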